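/- arXiv:1306.4570 — 6 statements merged into one kernel-verified Lean document; each statement's English description precedes it below -/
import Mathlib

section
/- Let E be a finite-dimensional real inner product space, A : E → E a symmetric (self-adjoint) linear operator, and D ⊆ E a linear subspace with dim D > 1 satisfying the Gauss-invariance condition for A. Then at least one of the following holds: (i) A(D) ⊆ D^⊥; (ii) A(D) ⊆ D; (iii) dim(D ∩ ker A) = dim D − 1. -/
open scoped RealInnerProductSpace

/-- If a subspace `D` with `dim D > 1` of a finite-dimensional real inner product
space is Gauss-invariant for a symmetric operator `A`, then `A(D) ⊆ D^⊥`,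
or `A(D) ⊆ D`, or `dim (D ∩ ker A) = dim D - 1`. -/
theorem curvature_invariant_trichotomy
    {E : Type*} [NormedAddCommGroup E] [InnerProductSpace ℝ E]
    [FiniteDimensional ℝ E] (A : E →ₗ[ℝ] E)
    (hA : ∀ u v : E, ⟪A u, v⟫ = ⟪u, A v⟫)
    (D : Submodule ℝ E) (hdim : 1 < Module.finrank ℝ D)
    (hGauss : ∀ X ∈ D, ∀ Y ∈ D, ∀ Z ∈ D,
      ⟪A Y, Z⟫ • A X - ⟪A X, Z⟫ • A Y ∈ D) :
    (∀ x ∈ D, A x ∈ Dᗮ) ∨ (∀ x ∈ D, A x ∈ D) ∨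
      Module.finrank ℝ ↥(D ⊓ LinearMap.ker A) = Module.finrank ℝ D - 1 := by
  by_cases h1 : ∀ x ∈ D, A x ∈ Dᗮ
  · exact Or.inl h1
  by_cases h2 : ∀ x ∈ D, A x ∈ D
  · exact Or.inr (Or.inl h2)
  right; right
  push_neg at h1 h2
  obtain ⟨X₀, hX₀D, hX₀⟩ := h2
  obtain ⟨W, hWD, hW⟩ := h1
  rw [Submodule.mem_orthogonal] at hW
  push_neg at hW
  obtain ⟨Z₁, hZ₁D, hZ₁⟩ := hW
  -- find Z₀ ∈ D with ⟪A X₀, Z₀⟫ ≠ 0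
  have hex : ∃ Z₀ ∈ D, ⟪A X₀, Z₀⟫ ≠ 0 := by
    by_contra hc
    push_neg at hc
    have h := hGauss X₀ hX₀D W hWD Z₁ hZ₁D
    rw [hc Z₁ hZ₁D, zero_smul, sub_zero] at h
    have hne : ⟪A W, Z₁⟫ ≠ 0 := by
      rw [real_inner_comm]; exact hZ₁
    have := D.smul_mem (⟪A W, Z₁⟫)⁻¹ h
    rw [smul_smul, inv_mul_cancel₀ hne, one_smul] at this
    exact hX₀ this
  obtain ⟨Z₀, hZ₀D, hZ₀⟩ := hex
  -- key: for Y ∈ D, ⟪A Y, Z₀⟫ = 0 → A Y = 0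
  have key : ∀ Y ∈ D, ⟪A Y, Z₀⟫ = 0 → A Y = 0 := by
    intro Y hYD hy0
    have hAYD : A Y ∈ D := by
      have h := hGauss Y hYD X₀ hX₀D Z₀ hZ₀D
      rw [hy0, zero_smul, sub_zero] at h
      have := D.smul_mem (⟪A X₀, Z₀⟫)⁻¹ h
      rwa [smul_smul, inv_mul_cancel₀ hZ₀, one_smul] at this
    have hperp : ∀ Z, Z ∈ D → ⟪A Y, Z⟫ = 0 := by
      intro Z hZD
      by_contra hne
      have h := hGauss X₀ hX₀D Y hYD Z hZD
      have h' : (⟪A Y, Z⟫ : ℝ) • A X₀ ∈ D := by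
        have := D.add_mem h (D.smul_mem (⟪A X₀, Z⟫) hAYD)
        rwa [sub_add_cancel] at this
      have := D.smul_mem (⟪A Y, Z⟫)⁻¹ h'
      rw [smul_smul, inv_mul_cancel₀ hne, one_smul] at this
      exact hX₀ this
    have : ⟪A Y, A Y⟫ = 0 := hperp (A Y) hAYD
    exact inner_self_eq_zero.mp this
  -- the functional ψ : D → ℝ, Y ↦ ⟪Z₀, A Y⟫
  set ψ : ↥D →ₗ[ℝ] ℝ :=
    ((innerSL ℝ Z₀).toLinearMap.comp A).comp D.subtype with hψ
  have hψval : ∀ y : ↥D, ψ y = ⟪A (y : E), Z₀⟫ := by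
    intro y
    simp [hψ, real_inner_comm]
  have hker : LinearMap.ker ψ = (D ⊓ LinearMap.ker A).comap D.subtype := by
    ext y
    simp only [LinearMap.mem_ker, Submodule.mem_comap, Submodule.mem_inf,
      Submodule.coe_subtype, LinearMap.mem_ker]
    rw [hψval]
    constructor
    · intro h
      exact ⟨y.2, key y y.2 h⟩
    · intro h
      rw [h.2, inner_zero_left]
  have hsurj : Function.Surjective ψ := by
    have hne : ψ ⟨X₀, hX₀D⟩ ≠ 0 := by rw [hψval]; exact hZ₀
    intro r
    refine ⟨(r / ψ ⟨X₀, hX₀D⟩) • ⟨X₀, hX₀D⟩, ?_⟩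
    rw [map_smul, smul_eq_mul, div_mul_cancel₀ _ hne]
  have hrn := LinearMap.finrank_range_add_finrank_ker ψ
  rw [LinearMap.range_eq_top.mpr hsurj, finrank_top, Module.finrank_self] at hrn
  have heq : Module.finrank ℝ ↥(D ⊓ LinearMap.ker A)
      = Module.finrank ℝ ↥(LinearMap.ker ψ) := by
    rw [hker]
    exact (Submodule.comapSubtypeEquivOfLe inf_le_left).finrank_eq.symm
  omega
end

section
/- Let E be a finite-dimensional real inner product space, A : E → E a symmetric (self-adjoint) linear operator that is injective, and D ⊆ E a linear subspace with dim D > 1 satisfying the Gauss-invariance condition for A. Then A(D) ⊆ D or A(D) ⊆ D^⊥. -/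
open scoped RealInnerProductSpace

/-- If a subspace `D` with `dim D > 1` of a finite-dimensional real inner product
space is Gauss-invariant for an injective symmetric operator `A`, then
`A(D) ⊆ D` or `A(D) ⊆ D^⊥`. -/
theorem curvature_invariant_of_injective
    {E : Type*} [NormedAddCommGroup E] [InnerProductSpace ℝ E]
    [FiniteDimensional ℝ E] (A : E →ₗ[ℝ] E)
    (hA : ∀ u v : E, ⟪A u, v⟫ = ⟪u, A v⟫)
    (hinj : Function.Injective A)
    (D : Submodule ℝ E) (hdim : 1 < Module.finrank ℝ D)
    (hGauss : ∀ X ∈ D, ∀ Y ∈ D, ∀ Z ∈ D,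
      ⟪A Y, Z⟫ • A X - ⟪A X, Z⟫ • A Y ∈ D) :
    (∀ x ∈ D, A x ∈ D) ∨ (∀ x ∈ D, A x ∈ Dᗮ) := by
  by_cases h0 : ∀ x ∈ D, ∀ z ∈ D, ⟪A x, z⟫ = 0
  · right
    intro x hx
    rw [Submodule.mem_orthogonal]
    intro u hu
    rw [real_inner_comm]
    exact h0 x hx u hu
  · left
    push_neg at h0
    obtain ⟨X0, hX0, Z0, hZ0, hc⟩ := h0
    set c : ℝ := ⟪A X0, Z0⟫ with hcdef
    have step1 : ∀ X ∈ D, c • A X - ⟪A X, Z0⟫ • A X0 ∈ D := fun X hX =>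
      hGauss X hX X0 hX0 Z0 hZ0
    have key : A X0 ∈ D := by
      by_contra hq
      set p : E := (D.orthogonalProjectionOnto (A X0) : E) with hp
      set q : E := A X0 - p with hqdef
      have hpD : p ∈ D := (D.orthogonalProjectionOnto (A X0)).2
      have hqD' : q ∈ Dᗮ := Submodule.sub_starProjection_mem_orthogonal _
      have hqne : q ≠ 0 := by
        intro h
        apply hq
        have : A X0 = p := by rwa [sub_eq_zero] at h
        rw [this]; exact hpD
      have step2 : ∀ X ∈ D, c • A X - ⟪A X, Z0⟫ • q ∈ D := by
        intro X hX
        have h1 := step1 X hX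
        have heq : c • A X - ⟪A X, Z0⟫ • q
            = (c • A X - ⟪A X, Z0⟫ • A X0) + ⟪A X, Z0⟫ • p := by
          rw [hqdef]; rw [smul_sub]; abel
        rw [heq]
        exact D.add_mem h1 (D.smul_mem _ hpD)
      -- rank one identity
      have rank1 : ∀ X ∈ D, ∀ Y ∈ D, ∀ Z ∈ D,
          ⟪A Y, Z⟫ * ⟪A X, Z0⟫ - ⟪A X, Z⟫ * ⟪A Y, Z0⟫ = 0 := by
        intro X hX Y hY Z hZ
        set s : ℝ := ⟪A Y, Z⟫ * ⟪A X, Z0⟫ - ⟪A X, Z⟫ * ⟪A Y, Z0⟫ with hs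
        have hmem : s • q ∈ D := by
          have hG := hGauss X hX Y hY Z hZ
          have h1 := step2 X hX
          have h2 := step2 Y hY
          have heq : s • q
              = c • (⟪A Y, Z⟫ • A X - ⟪A X, Z⟫ • A Y)
                - ⟪A Y, Z⟫ • (c • A X - ⟪A X, Z0⟫ • q)
                + ⟪A X, Z⟫ • (c • A Y - ⟪A Y, Z0⟫ • q) := by
            simp only [hs, smul_sub, smul_smul, sub_smul]
            module
          rw [heq]
          exact D.add_mem (D.sub_mem (D.smul_mem _ hG) (D.smul_mem _ h1))
            (D.smul_mem _ h2)
        by_contra hsne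
        apply hqne
        have hqD : q ∈ D := by
          have : s⁻¹ • (s • q) ∈ D := D.smul_mem _ hmem
          rwa [smul_smul, inv_mul_cancel₀ hsne, one_smul] at this
        have := (Submodule.mem_orthogonal D q).mp hqD' q hqD
        exact inner_self_eq_zero.mp this
      -- find nonzero X1 in D with ⟪A X1, Z0⟫ = 0
      set φ : D →ₗ[ℝ] ℝ :=
        { toFun := fun x => ⟪A (x : E), Z0⟫
          map_add' := by intro a b; simp [inner_add_left]
          map_smul' := by intro r a; simp [inner_smul_left] }
      have hker : LinearMap.ker φ ≠ ⊥ := by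
        intro hbot
        have hinjφ : Function.Injective φ := by
          rwa [← LinearMap.ker_eq_bot]
        have := LinearMap.finrank_le_finrank_of_injective hinjφ
        simp [Module.finrank_self] at this
        omega
      obtain ⟨x1, hx1ker, hx1ne⟩ := (Submodule.ne_bot_iff _).mp hker
      have hX1mem : (x1 : E) ∈ D := x1.2
      have hX1Z0 : ⟪A (x1 : E), Z0⟫ = 0 := hx1ker
      have hX1orth : ∀ Z ∈ D, ⟪A (x1 : E), Z⟫ = 0 := by
        intro Z hZ
        have := rank1 (x1 : E) hX1mem X0 hX0 Z hZ
        rw [hX1Z0, mul_zero] at this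
        have h2 : ⟪A (x1:E), Z⟫ * c = 0 := by linarith
        exact (mul_eq_zero.mp h2).resolve_right hc
      have hAX1D : A (x1 : E) ∈ D := by
        have h1 := step1 (x1 : E) hX1mem
        rw [hX1Z0, zero_smul, sub_zero] at h1
        have : c⁻¹ • (c • A (x1:E)) ∈ D := D.smul_mem _ h1
        rwa [smul_smul, inv_mul_cancel₀ hc, one_smul] at this
      have hAX1zero : A (x1 : E) = 0 := by
        have := hX1orth (A (x1:E)) hAX1D
        exact inner_self_eq_zero.mp this
      apply hx1ne
      have : (x1 : E) = 0 := hinj (by rw [hAX1zero, map_zero])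
      exact Subtype.ext this
    intro x hx
    have h1 := step1 x hx
    have h2 : c • A x ∈ D := by
      have := D.add_mem h1 (D.smul_mem ⟪A x, Z0⟫ key)
      simpa using this
    have : c⁻¹ • (c • A x) ∈ D := D.smul_mem _ h2
    rwa [smul_smul, inv_mul_cancel₀ hc, one_smul] at this
end

section
/- Let E be a finite-dimensional real inner product space, A : E → E a symmetric (self-adjoint) linear operator, and D ⊆ E a linear subspace satisfying the Gauss-invariance condition for A. Suppose X₁ ∈ D with ‖X₁‖ = 1 and that A X₁ − λ₁ X₁ ∈ D^⊥ for some real number λ₁ ≠ 0. Then A W ∈ D for every W ∈ D with ⟨W, X₁⟩ = 0. -/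
open scoped RealInnerProductSpace

/-- If `D` is Gauss-invariant for a symmetric operator `A`, `X₁ ∈ D` is a unit vector
with `A X₁ - λ₁ X₁ ∈ D^⊥` and `λ₁ ≠ 0`, then `A W ∈ D` for every `W ∈ D`
orthogonal to `X₁`. -/
theorem gauss_invariant_image_in_D
    {E : Type*} [NormedAddCommGroup E] [InnerProductSpace ℝ E]
    [FiniteDimensional ℝ E] (A : E →ₗ[ℝ] E)
    (hA : ∀ u v : E, ⟪A u, v⟫ = ⟪u, A v⟫)
    (D : Submodule ℝ E)
    (hGauss : ∀ X ∈ D, ∀ Y ∈ D, ∀ Z ∈ D,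
      ⟪A Y, Z⟫ • A X - ⟪A X, Z⟫ • A Y ∈ D)
    (X₁ : E) (hX₁ : X₁ ∈ D) (hX₁norm : ‖X₁‖ = 1)
    (l₁ : ℝ) (hl₁ : l₁ ≠ 0) (hV₁ : A X₁ - l₁ • X₁ ∈ Dᗮ) :
    ∀ W ∈ D, ⟪W, X₁⟫ = 0 → A W ∈ D := by
  intro W hW hWX
  have h1 : ⟪X₁, A X₁ - l₁ • X₁⟫ = 0 := (Submodule.mem_orthogonal D _).1 hV₁ X₁ hX₁
  have h2 : ⟪W, A X₁ - l₁ • X₁⟫ = 0 := (Submodule.mem_orthogonal D _).1 hV₁ W hW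
  rw [inner_sub_right, inner_smul_right] at h1 h2
  have hx : ⟪X₁, X₁⟫ = 1 := by
    rw [real_inner_self_eq_norm_sq, hX₁norm]; norm_num
  have hAX₁X₁ : ⟪A X₁, X₁⟫ = l₁ := by
    rw [real_inner_comm]
    rw [hx] at h1
    linarith
  have hAWX₁ : ⟪A W, X₁⟫ = 0 := by
    rw [hA W X₁]
    rw [hWX] at h2
    linarith
  have hG := hGauss W hW X₁ hX₁ X₁ hX₁
  rw [hAX₁X₁, hAWX₁, zero_smul, sub_zero] at hG
  exact (Submodule.smul_mem_iff D hl₁).1 hG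
end

section
/- Let E be a finite-dimensional real inner product space, A : E → E a symmetric (self-adjoint) linear operator, and D ⊆ E a linear subspace satisfying the Gauss-invariance condition for A. Suppose X₁ ∈ D with ‖X₁‖ = 1, that A X₁ − λ₁ X₁ ∈ D^⊥ for some real number λ₁ ≠ 0, and that A X₁ ∉ D. Then ⟨A W, W⟩ = 0 for every W ∈ D with ⟨W, X₁⟩ = 0. -/
open scoped RealInnerProductSpace

/-- If `D` is Gauss-invariant for a symmetric operator `A`, `X₁ ∈ D` is a unit vector
with `A X₁ - λ₁ X₁ ∈ D^⊥`, `λ₁ ≠ 0`, and `A X₁ ∉ D`, then `⟪A W, W⟫ = 0` for every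
`W ∈ D` orthogonal to `X₁`. -/
theorem gauss_invariant_isotropic
    {E : Type*} [NormedAddCommGroup E] [InnerProductSpace ℝ E]
    [FiniteDimensional ℝ E] (A : E →ₗ[ℝ] E)
    (hA : ∀ u v : E, ⟪A u, v⟫ = ⟪u, A v⟫)
    (D : Submodule ℝ E)
    (hGauss : ∀ X ∈ D, ∀ Y ∈ D, ∀ Z ∈ D,
      ⟪A Y, Z⟫ • A X - ⟪A X, Z⟫ • A Y ∈ D)
    (X₁ : E) (hX₁ : X₁ ∈ D) (hX₁norm : ‖X₁‖ = 1)
    (l₁ : ℝ) (hl₁ : l₁ ≠ 0) (hV₁ : A X₁ - l₁ • X₁ ∈ Dᗮ)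
    (hAX₁ : A X₁ ∉ D) :
    ∀ W ∈ D, ⟪W, X₁⟫ = 0 → ⟪A W, W⟫ = 0 := by
  intro W hW hWX
  have hX₁W : ⟪X₁, W⟫ = 0 := by rw [real_inner_comm]; exact hWX
  have hAX₁W : ⟪A X₁, W⟫ = 0 := by
    have h1 : ⟪A X₁ - l₁ • X₁, W⟫ = 0 := by rw [real_inner_comm]; exact hV₁ W hW
    simpa [inner_sub_left, inner_smul_left, hX₁W] using h1
  have hG := hGauss W hW X₁ hX₁ W hW
  rw [hAX₁W, zero_smul, zero_sub] at hG
  by_contra h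
  apply hAX₁
  have := D.smul_mem (-⟪A W, W⟫)⁻¹ hG
  rw [smul_neg, smul_smul] at this; rw [show (-(inner ℝ (A W) W))⁻¹ * inner ℝ (A W) W = -1 by field_simp] at this; simpa using this
end

section
/- Let E be a finite-dimensional real inner product space, A : E → E a symmetric (self-adjoint) linear operator, and D ⊆ E a linear subspace satisfying the Gauss-invariance condition for A. Suppose X₁ ∈ D with ‖X₁‖ = 1, that A X₁ − λ₁ X₁ ∈ D^⊥ for some real number λ₁ ≠ 0, and that A X₁ ∉ D. Then A W = 0 for every W ∈ D with ⟨W, X₁⟩ = 0; consequently D ∩ ker A = {W ∈ D : ⟨W, X₁⟩ = 0}. -/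
open scoped RealInnerProductSpace

/-- If `D` is Gauss-invariant for a symmetric operator `A`, `X₁ ∈ D` is a unit vector
with `A X₁ - λ₁ X₁ ∈ D^⊥`, `λ₁ ≠ 0`, and `A X₁ ∉ D`, then `A W = 0` for every
`W ∈ D` orthogonal to `X₁`; consequently `D ∩ ker A = {W ∈ D : ⟪W, X₁⟫ = 0}`. -/
theorem gauss_invariant_kernel
    {E : Type*} [NormedAddCommGroup E] [InnerProductSpace ℝ E]
    [FiniteDimensional ℝ E] (A : E →ₗ[ℝ] E)
    (hA : ∀ u v : E, ⟪A u, v⟫ = ⟪u, A v⟫)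
    (D : Submodule ℝ E)
    (hGauss : ∀ X ∈ D, ∀ Y ∈ D, ∀ Z ∈ D,
      ⟪A Y, Z⟫ • A X - ⟪A X, Z⟫ • A Y ∈ D)
    (X₁ : E) (hX₁ : X₁ ∈ D) (hX₁norm : ‖X₁‖ = 1)
    (l₁ : ℝ) (hl₁ : l₁ ≠ 0) (hV₁ : A X₁ - l₁ • X₁ ∈ Dᗮ)
    (hAX₁ : A X₁ ∉ D) :
    (∀ W ∈ D, ⟪W, X₁⟫ = 0 → A W = 0) ∧
      (∀ W : E, W ∈ D ⊓ LinearMap.ker A ↔ W ∈ D ∧ ⟪W, X₁⟫ = 0) := by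
  -- A X₁ pairs with D like l₁ • X₁:
  have hZ : ∀ Z ∈ D, ⟪A X₁, Z⟫ = l₁ * ⟪X₁, Z⟫ := by
    intro Z hZ
    have hZV : ⟪Z, A X₁ - l₁ • X₁⟫ = 0 := (Submodule.mem_orthogonal D _).1 hV₁ Z hZ
    rw [inner_sub_right, inner_smul_right, sub_eq_zero] at hZV
    rw [real_inner_comm Z (A X₁), real_inner_comm Z X₁]; exact hZV
  have key : ∀ W ∈ D, ⟪W, X₁⟫ = 0 → A W = 0 := by
    intro W hW hWX
    have h1 : ⟪A W, X₁⟫ = 0 := by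
      rw [hA W X₁, real_inner_comm (A X₁) W, hZ W hW, real_inner_comm W X₁, hWX, mul_zero]
    -- A W ∈ D
    have hAWD : A W ∈ D := by
      have h := hGauss X₁ hX₁ W hW X₁ hX₁
      rw [h1, hZ X₁ hX₁, real_inner_self_eq_norm_sq, hX₁norm] at h
      simp only [zero_smul, one_pow, mul_one, zero_sub] at h
      have h' : l₁ • A W ∈ D := (Submodule.neg_mem_iff D).1 h
      have := D.smul_mem l₁⁻¹ h'
      rwa [smul_smul, inv_mul_cancel₀ hl₁, one_smul] at this
    -- A W ⊥ D
    have h2 : ∀ Z ∈ D, ⟪A W, Z⟫ = 0 := by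
      intro Z hZD
      by_contra hne
      have h := hGauss X₁ hX₁ W hW Z hZD
      have hmem : ⟪A W, Z⟫ • A X₁ ∈ D := by
        have := D.add_mem h (D.smul_mem (⟪A X₁, Z⟫) hAWD)
        simpa using this
      exact hAX₁ (by
        have := D.smul_mem (⟪A W, Z⟫)⁻¹ hmem
        rwa [smul_smul, inv_mul_cancel₀ hne, one_smul] at this)
    have := h2 (A W) hAWD
    exact inner_self_eq_zero.mp this
  refine ⟨key, fun W => ⟨?_, ?_⟩⟩
  · rintro ⟨hWD, hWker⟩
    refine ⟨hWD, ?_⟩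
    have hAW : A W = 0 := hWker
    have : ⟪A W, X₁⟫ = 0 := by rw [hAW]; simp
    rw [hA W X₁, real_inner_comm (A X₁) W, hZ W hWD] at this
    rw [← real_inner_comm W X₁]
    exact (mul_eq_zero.mp this).resolve_left hl₁
  · rintro ⟨hWD, hWX⟩
    exact ⟨hWD, key W hWD hWX⟩
end

section
/- Let I ⊆ ℝ be an open interval, γ : I → ℝ^N twice differentiable with ‖γ'(s)‖ = 1 for all s ∈ I, and let ξ₁, …, ξ_m : I → ℝ^N be differentiable maps such that for all s ∈ I: the vectors ξ₁(s), …, ξ_m(s) are orthonormal, ⟨ξ_i(s), γ'(s)⟩ = 0, and ξ_i'(s) ∈ ℝ·γ'(s). Define F : I × ℝ^m → ℝ^N by F(s, y) = γ(s) + Σ_{i=1}^m y_i ξ_i(s). Then the total derivative of F at a point (s, y), as a linear map ℝ × ℝ^m → ℝ^N, is injective if and only if ⟨γ''(s), Σ_{i=1}^m y_i ξ_i(s)⟩ ≠ 1. (Hence F is an immersion precisely on I × Ω, where Ω = {y ∈ ℝ^m : ⟨γ''(s), Σ_i y_i ξ_i(s)⟩ ≠ 1 for all s ∈ I}.) -/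
open scoped RealInnerProductSpace

/-- The partial tube parametrization `F(s,y) = γ(s) + ∑ yᵢ ξᵢ(s)` over a unit speed
curve with a parallel orthonormal normal frame is an immersion at `(s, y)` (i.e. its
total derivative there is injective) if and only if `⟪γ''(s), ∑ yᵢ ξᵢ(s)⟫ ≠ 1`. -/
theorem partial_tube_immersion_iff
    {N m : ℕ} (a b : ℝ)
    (γ γ' γ'' : ℝ → EuclideanSpace ℝ (Fin N))
    (ξ ξ' : Fin m → ℝ → EuclideanSpace ℝ (Fin N))
    (hγ : ∀ s ∈ Set.Ioo a b, HasDerivAt γ (γ' s) s)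
    (hγ' : ∀ s ∈ Set.Ioo a b, HasDerivAt γ' (γ'' s) s)
    (hunit : ∀ s ∈ Set.Ioo a b, ‖γ' s‖ = 1)
    (horth : ∀ i j, ∀ s ∈ Set.Ioo a b,
      ⟪ξ i s, ξ j s⟫ = if i = j then (1 : ℝ) else 0)
    (hξ : ∀ i, ∀ s ∈ Set.Ioo a b, HasDerivAt (ξ i) (ξ' i s) s)
    (hnormal : ∀ i, ∀ s ∈ Set.Ioo a b, ⟪ξ i s, γ' s⟫ = 0)
    (hpar : ∀ i, ∀ s ∈ Set.Ioo a b, ∃ c : ℝ, ξ' i s = c • γ' s) :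
    ∀ s ∈ Set.Ioo a b, ∀ y : Fin m → ℝ,
      ∀ Dp : (ℝ × (Fin m → ℝ)) →L[ℝ] EuclideanSpace ℝ (Fin N),
        HasFDerivAt (fun p : ℝ × (Fin m → ℝ) =>
            γ p.1 + ∑ i, p.2 i • ξ i p.1) Dp (s, y) →
          (Function.Injective Dp ↔ ⟪γ'' s, ∑ i, y i • ξ i s⟫ ≠ 1) := by
  intro s hs y Dp hDp
  choose c hc using fun i => hpar i s hs
  have hinner1 : ⟪γ' s, γ' s⟫ = 1 := by
    rw [real_inner_self_eq_norm_sq, hunit s hs]; norm_num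
  -- c i = -⟪ξ i s, γ'' s⟫
  have hci : ∀ i, ⟪ξ i s, γ'' s⟫ = -c i := by
    intro i
    have h1 : HasDerivAt (fun t => ⟪ξ i t, γ' t⟫)
        (⟪ξ i s, γ'' s⟫ + ⟪ξ' i s, γ' s⟫) s :=
      HasDerivAt.inner ℝ (hξ i s hs) (hγ' s hs)
    have h2 : HasDerivAt (fun t => ⟪ξ i t, γ' t⟫) 0 s := by
      have he : (fun t => ⟪ξ i t, γ' t⟫) =ᶠ[nhds s] fun _ => (0:ℝ) := by
        filter_upwards [Ioo_mem_nhds hs.1 hs.2] with t ht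
        exact hnormal i t ht
      exact (hasDerivAt_const s (0:ℝ)).congr_of_eventuallyEq he
    have h3 : ⟪ξ i s, γ'' s⟫ + ⟪ξ' i s, γ' s⟫ = 0 := h1.unique h2
    have h4 : ⟪ξ' i s, γ' s⟫ = c i := by
      rw [hc i, real_inner_smul_left, hinner1, mul_one]
    linarith
  -- explicit derivative
  set L : (ℝ × (Fin m → ℝ)) →L[ℝ] EuclideanSpace ℝ (Fin N) :=
    (ContinuousLinearMap.fst ℝ ℝ (Fin m → ℝ)).smulRight (γ' s)
      + ∑ i, (y i • ((ContinuousLinearMap.fst ℝ ℝ (Fin m → ℝ)).smulRight (ξ' i s))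
        + ((ContinuousLinearMap.proj i).comp
            (ContinuousLinearMap.snd ℝ ℝ (Fin m → ℝ))).smulRight (ξ i s)) with hLdef
  have hL : HasFDerivAt (fun p : ℝ × (Fin m → ℝ) =>
      γ p.1 + ∑ i, p.2 i • ξ i p.1) L (s, y) := by
    have h1 : HasFDerivAt (fun p : ℝ × (Fin m → ℝ) => γ p.1)
        ((ContinuousLinearMap.fst ℝ ℝ (Fin m → ℝ)).smulRight (γ' s)) (s, y) := by
      have h := ((hγ s hs).hasFDerivAt).comp (s, y) (hasFDerivAt_fst (𝕜 := ℝ) (p := (s, y)))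
      convert h using 1
      all_goals rfl

    have h2 : ∀ i : Fin m, HasFDerivAt (fun p : ℝ × (Fin m → ℝ) => p.2 i • ξ i p.1)
        (y i • ((ContinuousLinearMap.fst ℝ ℝ (Fin m → ℝ)).smulRight (ξ' i s))
          + ((ContinuousLinearMap.proj i).comp
              (ContinuousLinearMap.snd ℝ ℝ (Fin m → ℝ))).smulRight (ξ i s)) (s, y) := by
      intro i
      have hcoord : HasFDerivAt (fun p : ℝ × (Fin m → ℝ) => p.2 i)
          ((ContinuousLinearMap.proj i).comp (ContinuousLinearMap.snd ℝ ℝ (Fin m → ℝ)))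
          (s, y) :=
        (((ContinuousLinearMap.proj i).comp
          (ContinuousLinearMap.snd ℝ ℝ (Fin m → ℝ)))).hasFDerivAt
      have hvec : HasFDerivAt (fun p : ℝ × (Fin m → ℝ) => ξ i p.1)
          ((ContinuousLinearMap.fst ℝ ℝ (Fin m → ℝ)).smulRight (ξ' i s)) (s, y) := by
        have h := ((hξ i s hs).hasFDerivAt).comp (s, y) (hasFDerivAt_fst (𝕜 := ℝ) (p := (s, y)))
        convert h using 1
        all_goals rfl

      simpa using hcoord.fun_smul hvec
    exact h1.add (HasFDerivAt.fun_sum fun i _ => h2 i)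
  have hDL : Dp = L := hDp.unique hL
  set k : ℝ := 1 + ∑ i, y i * c i with hk
  have happ : ∀ u : ℝ, ∀ v : Fin m → ℝ,
      Dp (u, v) = (u * k) • γ' s + ∑ i, v i • ξ i s := by
    intro u v
    rw [hDL, hLdef]
    simp only [ContinuousLinearMap.add_apply, ContinuousLinearMap.sum_apply,
      ContinuousLinearMap.smulRight_apply, ContinuousLinearMap.coe_comp',
      Function.comp_apply, ContinuousLinearMap.coe_fst',
      ContinuousLinearMap.coe_snd', ContinuousLinearMap.proj_apply,
      ContinuousLinearMap.smul_apply]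
    rw [Finset.sum_add_distrib]
    have : ∑ i, y i • u • ξ' i s = (u * ∑ i, y i * c i) • γ' s := by
      rw [Finset.mul_sum, Finset.sum_smul]
      apply Finset.sum_congr rfl
      intro i _
      rw [hc i, smul_smul, smul_smul]
      congr 1
      ring
    rw [this, hk]
    module
  have hinnersum : ⟪γ'' s, ∑ i, y i • ξ i s⟫ = 1 - k := by
    rw [inner_sum, hk]
    have : ∀ i ∈ Finset.univ, ⟪γ'' s, y i • ξ i s⟫ = -(y i * c i) := by
      intro i _
      rw [real_inner_smul_right, real_inner_comm, hci i]; ring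
    rw [Finset.sum_congr rfl this]
    simp
  have hiff : Function.Injective Dp ↔ k ≠ 0 := by
    constructor
    · intro hinj hk0
      have h1 : Dp (1, 0) = Dp (0, 0) := by
        rw [happ, happ, hk0]
        simp
      have := hinj h1
      simp [Prod.ext_iff] at this
    · intro hk0
      rw [injective_iff_map_eq_zero]
      rintro ⟨u, v⟩ h0
      rw [happ] at h0
      have hu : u = 0 := by
        have h1 : ⟪γ' s, (u * k) • γ' s + ∑ i, v i • ξ i s⟫ = 0 := by rw [h0, inner_zero_right]
        rw [inner_add_right, real_inner_smul_right, hinner1, inner_sum] at h1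
        have h2 : ∀ i ∈ Finset.univ, ⟪γ' s, v i • ξ i s⟫ = 0 := by
          intro i _
          rw [real_inner_smul_right, real_inner_comm, hnormal i s hs, mul_zero]
        rw [Finset.sum_congr rfl h2] at h1
        simp at h1
        rcases h1 with h1 | h1
        · exact h1
        · exact absurd h1 hk0
      have hsum : ∑ i, v i • ξ i s = 0 := by
        rw [hu] at h0
        simpa using h0
      have hv : ∀ j, v j = 0 := by
        intro j
        have h1 : ⟪ξ j s, ∑ i, v i • ξ i s⟫ = v j := by
          rw [inner_sum]
          have h2 : ∀ i ∈ Finset.univ, ⟪ξ j s, v i • ξ i s⟫ = if j = i then v i else 0 := by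
            intro i _
            rw [real_inner_smul_right, horth j i s hs]
            split <;> simp
          rw [Finset.sum_congr rfl h2, Finset.sum_ite_eq]
          simp
        rw [hsum, inner_zero_right] at h1
        exact h1.symm
      ext
      · exact hu
      · exact hv _
  rw [hiff, hinnersum]
  constructor
  · intro h h'; apply h; linarith
  · intro h h'; apply h; rw [h']; ring
end
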